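/- Let s ∈ (0,1/2) and j ∈ ℕ, and define f_j(y) = ∫_{1}^{∞} e^{−y(σ−1)} [(σ²−1)^s/σ]^{j+1} dσ/σ for y ≥ 0. Then f_j is infinitely differentiable on (0,∞), and for each k ∈ ℕ there is a constant C_{k,j} such that |f_j^{(k)}(y)| ≤ C_{k,j} / y^{k+1+s(j+1)} for all y ∈ [1,∞), where f_j^{(k)} denotes the k-th derivative. -/

import Mathlib

open MeasureTheory Real Set

/-- The function `f_j(y) = ∫_1^∞ e^{-y(σ-1)} [(σ²-1)^s/σ]^{j+1} dσ/σ`. -/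
noncomputable def fAux (s : ℝ) (j : ℕ) (y : ℝ) : ℝ :=
  ∫ σ in Set.Ioi (1 : ℝ), Real.exp (-(y * (σ - 1))) * ((σ ^ 2 - 1) ^ s / σ) ^ (j + 1) / σ



lemma shift_integral (f : ℝ → ℝ) :
    ∫ σ in Ioi (1:ℝ), f σ = ∫ t in Ioi (0:ℝ), f (t + 1) := by
  have h := (measurePreserving_add_right (volume : Measure ℝ) 1).setIntegral_preimage_emb
    (Homeomorph.addRight (1:ℝ)).measurableEmbedding f (Ioi 1)
  rw [← h]
  congr 1
  ext x; simp [mem_Ioi]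

lemma shift_integrableOn (f : ℝ → ℝ) :
    IntegrableOn f (Ioi 1) ↔ IntegrableOn (fun t => f (t + 1)) (Ioi 0) := by
  have h := (measurePreserving_add_right (volume : Measure ℝ) 1).integrableOn_comp_preimage
    (f := f) (s := Ioi 1) (Homeomorph.addRight (1:ℝ)).measurableEmbedding
  rw [← h]
  have : ((· + 1) ⁻¹' Ioi (1:ℝ)) = Ioi 0 := by ext x; simp [mem_Ioi]
  rw [this]; rfl

lemma integrable_base {b r : ℝ} (hb : 0 ≤ b) (hr : 0 < r) :
    IntegrableOn (fun σ => (σ - 1) ^ b * Real.exp (-(r * (σ - 1)))) (Ioi (1:ℝ)) := by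
  rw [shift_integrableOn]
  simp only [add_sub_cancel_right]
  have h := integrableOn_rpow_mul_exp_neg_mul_rpow (s := b) (p := 1) (b := r)
    (by linarith) zero_lt_one hr
  refine h.congr_fun (fun x hx => ?_) measurableSet_Ioi
  simp only [Real.rpow_one]; ring_nf

lemma integral_base {b r : ℝ} (hb : 0 ≤ b) (hr : 0 < r) :
    ∫ σ in Ioi (1:ℝ), (σ - 1) ^ b * Real.exp (-(r * (σ - 1)))
      = Real.Gamma (b + 1) / r ^ (b + 1) := by
  rw [shift_integral]
  simp only [add_sub_cancel_right]
  have h := Real.integral_rpow_mul_exp_neg_mul_Ioi (a := b + 1) (r := r) (by linarith) hr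
  simp only [add_sub_cancel_right] at h
  rw [h, Real.div_rpow (by norm_num) hr.le, Real.one_rpow]
  ring

noncomputable def Haux (s : ℝ) (j k : ℕ) (y σ : ℝ) : ℝ :=
  (1 - σ) ^ k * (Real.exp (-(y * (σ - 1))) * ((σ ^ 2 - 1) ^ s / σ) ^ (j + 1) / σ)

lemma Haux_meas (s : ℝ) (j k : ℕ) (y : ℝ) :
    AEStronglyMeasurable (Haux s j k y) (volume.restrict (Ioi 1)) := by
  apply ContinuousOn.aestronglyMeasurable _ measurableSet_Ioi
  unfold Haux
  have hne : ∀ σ ∈ Ioi (1:ℝ), σ ≠ 0 := fun σ hσ => by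
    have : (1:ℝ) < σ := hσ; positivity
  apply ContinuousOn.mul
  · exact ((continuousOn_const.sub continuousOn_id).pow k)
  · apply ContinuousOn.div _ continuousOn_id hne
    apply ContinuousOn.mul
    · exact ((continuous_const.mul (continuous_id.sub continuous_const)).neg.rexp).continuousOn
    · apply ContinuousOn.pow
      apply ContinuousOn.div _ continuousOn_id hne
      exact ((continuousOn_id.pow 2).sub continuousOn_const).rpow_const
        (fun σ hσ => Or.inl (by nlinarith [mem_Ioi.mp hσ] : σ ^ 2 - 1 ≠ 0))

lemma Haux_bound {s : ℝ} {j : ℕ} (hs0 : 0 < s) (hs2 : s < 1 / 2) (k : ℕ) {y σ : ℝ}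
    (hσ : 1 < σ) :
    |Haux s j k y σ| ≤ 2 ^ (s * ((j : ℝ) + 1)) *
      ((σ - 1) ^ ((k : ℝ) + s * ((j : ℝ) + 1)) * Real.exp (-(y * (σ - 1)))) := by
  set a : ℝ := s * ((j : ℝ) + 1) with ha
  have hσ0 : 0 < σ := lt_trans one_pos hσ
  have ht : 0 < σ - 1 := by linarith
  have hsq : 0 < σ ^ 2 - 1 := by nlinarith
  have ha0 : 0 < a := by positivity
  have hE : 0 < Real.exp (-(y * (σ - 1))) := Real.exp_pos _
  -- rewrite the power part
  have hP : ((σ ^ 2 - 1) ^ s / σ) ^ (j + 1) = (σ ^ 2 - 1) ^ a / σ ^ (j + 1) := by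
    rw [div_pow, ← Real.rpow_natCast ((σ ^ 2 - 1) ^ s) (j + 1), ← Real.rpow_mul hsq.le]
    push_cast [ha]
    norm_num
  have hP2 : (σ ^ 2 - 1) ^ a / σ ^ (j + 1) / σ ≤ 2 ^ a * (σ - 1) ^ a := by
    have e1 : (σ ^ 2 - 1) ^ a = (σ - 1) ^ a * (σ + 1) ^ a := by
      rw [← Real.mul_rpow ht.le (by linarith)]
      ring_nf
    have e2 : (σ + 1 : ℝ) ^ a ≤ 2 ^ a * σ ^ a := by
      rw [← Real.mul_rpow (by norm_num) hσ0.le]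
      exact Real.rpow_le_rpow (by linarith) (by linarith) ha0.le
    have e3 : σ ^ a ≤ σ ^ (j + 2 : ℕ) := by
      rw [← Real.rpow_natCast σ (j + 2)]
      apply Real.rpow_le_rpow_of_exponent_le hσ.le
      push_cast
      nlinarith [Nat.cast_nonneg (α := ℝ) j]
    have h4 : (σ ^ 2 - 1) ^ a ≤ (σ - 1) ^ a * (2 ^ a * σ ^ a) := by
      rw [e1]
      exact mul_le_mul_of_nonneg_left e2 (Real.rpow_nonneg ht.le a)
    rw [div_div, ← pow_succ]
    rw [div_le_iff₀ (by positivity)]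
    calc (σ ^ 2 - 1) ^ a ≤ (σ - 1) ^ a * (2 ^ a * σ ^ a) := h4
      _ ≤ (σ - 1) ^ a * (2 ^ a * σ ^ (j + 2 : ℕ)) := by
          apply mul_le_mul_of_nonneg_left _ (Real.rpow_nonneg ht.le a)
          exact mul_le_mul_of_nonneg_left e3 (Real.rpow_nonneg (by norm_num) a)
      _ = 2 ^ a * (σ - 1) ^ a * σ ^ (j + 2 : ℕ) := by ring
  -- put it together
  have hXnn : 0 ≤ Real.exp (-(y * (σ - 1))) * ((σ ^ 2 - 1) ^ s / σ) ^ (j + 1) / σ := by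
    positivity
  rw [Haux, abs_mul, abs_pow, abs_sub_comm, abs_of_pos ht, abs_of_nonneg hXnn]
  calc (σ - 1) ^ k * (Real.exp (-(y * (σ - 1))) * ((σ ^ 2 - 1) ^ s / σ) ^ (j + 1) / σ)
      = (σ - 1) ^ k * Real.exp (-(y * (σ - 1))) * ((σ ^ 2 - 1) ^ a / σ ^ (j + 1) / σ) := by
        rw [hP]; ring
    _ ≤ (σ - 1) ^ k * Real.exp (-(y * (σ - 1))) * (2 ^ a * (σ - 1) ^ a) := by
        exact mul_le_mul_of_nonneg_left hP2 (by positivity)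
    _ = 2 ^ a * ((σ - 1) ^ ((k : ℝ) + a) * Real.exp (-(y * (σ - 1)))) := by
        rw [Real.rpow_add ht, Real.rpow_natCast]
        ring

noncomputable def Gaux (s : ℝ) (j k : ℕ) (y : ℝ) : ℝ := ∫ σ in Ioi (1:ℝ), Haux s j k y σ

lemma Haux_hasDerivAt (s : ℝ) (j k : ℕ) (σ : ℝ) (y : ℝ) :
    HasDerivAt (fun y => Haux s j k y σ) (Haux s j (k + 1) y σ) y := by
  have h1 : HasDerivAt (fun y : ℝ => -(y * (σ - 1))) (-(σ - 1)) y :=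
    by simpa using ((hasDerivAt_id y).mul_const (σ - 1)).fun_neg
  have h2 := h1.exp
  have h3 := ((h2.mul_const (((σ ^ 2 - 1) ^ s / σ) ^ (j + 1))).div_const σ).const_mul
    ((1 - σ) ^ k)
  refine HasDerivAt.congr_deriv (f := fun y => Haux s j k y σ) h3 ?_
  simp only [Haux, pow_succ]
  ring

lemma Haux_integrable {s : ℝ} {j : ℕ} (hs0 : 0 < s) (hs2 : s < 1 / 2) (k : ℕ) {y : ℝ}
    (hy : 0 < y) : IntegrableOn (Haux s j k y) (Ioi 1) := by
  have hb : IntegrableOn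
      (fun σ => 2 ^ (s * ((j : ℝ) + 1)) *
        ((σ - 1) ^ ((k : ℝ) + s * ((j : ℝ) + 1)) * Real.exp (-(y * (σ - 1))))) (Ioi 1) := by
    exact (integrable_base (by positivity) hy).const_mul _
  refine Integrable.mono' hb (Haux_meas s j k y) ?_
  refine (ae_restrict_iff' measurableSet_Ioi).2 (Filter.Eventually.of_forall fun σ hσ => ?_)
  rw [Real.norm_eq_abs]
  exact Haux_bound hs0 hs2 k hσ

lemma Gaux_hasDerivAt {s : ℝ} {j : ℕ} (hs0 : 0 < s) (hs2 : s < 1 / 2) (k : ℕ) {y₀ : ℝ}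
    (hy : 0 < y₀) : HasDerivAt (Gaux s j k) (Gaux s j (k + 1) y₀) y₀ := by
  have hε : 0 < y₀ / 2 := by linarith
  have key := hasDerivAt_integral_of_dominated_loc_of_deriv_le (F := fun y σ => Haux s j k y σ)
    (F' := fun y σ => Haux s j (k + 1) y σ) (μ := volume.restrict (Ioi 1)) (x₀ := y₀)
    (bound := fun σ => 2 ^ (s * ((j : ℝ) + 1)) *
      ((σ - 1) ^ (((k : ℕ) + 1 : ℝ) + s * ((j : ℝ) + 1)) * Real.exp (-(y₀ / 2 * (σ - 1)))))
    (Metric.ball_mem_nhds y₀ hε)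
    (Filter.Eventually.of_forall fun y => Haux_meas s j k y)
    (Haux_integrable hs0 hs2 k hy)
    (Haux_meas s j (k + 1) y₀)
    ?_ ?_ ?_
  · exact key.2
  · refine (ae_restrict_iff' measurableSet_Ioi).2 (Filter.Eventually.of_forall fun σ hσ => ?_)
    intro y hyb
    have hσ1 : (1:ℝ) < σ := hσ
    have hyy : y₀ / 2 ≤ y := by
      have := Metric.mem_ball.mp hyb
      rw [Real.dist_eq, abs_lt] at this
      linarith [this.1]
    rw [Real.norm_eq_abs]
    refine (Haux_bound hs0 hs2 (k + 1) hσ1).trans ?_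
    have hexp : Real.exp (-(y * (σ - 1))) ≤ Real.exp (-(y₀ / 2 * (σ - 1))) := by
      apply Real.exp_le_exp.2
      nlinarith
    push_cast
    have h1 : (0:ℝ) ≤ (σ - 1) ^ (((k : ℝ) + 1) + s * ((j : ℝ) + 1)) :=
      Real.rpow_nonneg (by linarith) _
    have h2 : (0:ℝ) ≤ 2 ^ (s * ((j : ℝ) + 1)) := Real.rpow_nonneg (by norm_num) _
    exact mul_le_mul_of_nonneg_left (mul_le_mul_of_nonneg_left hexp h1) h2
  · exact (integrable_base (by positivity) hε).const_mul _
  · exact Filter.Eventually.of_forall fun σ => fun y _ => Haux_hasDerivAt s j k σ y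

lemma fAux_eq_Gaux (s : ℝ) (j : ℕ) : fAux s j = Gaux s j 0 := by
  funext y; simp [fAux, Gaux, Haux]

lemma iteratedDeriv_fAux {s : ℝ} {j : ℕ} (hs0 : 0 < s) (hs2 : s < 1 / 2) (k : ℕ) :
    ∀ y ∈ Ioi (0:ℝ), iteratedDeriv k (fAux s j) y = Gaux s j k y := by
  induction k with
  | zero => intro y hy; simp [iteratedDeriv_zero, fAux_eq_Gaux]
  | succ k IH =>
    intro y hy
    rw [iteratedDeriv_succ]
    have heq : iteratedDeriv k (fAux s j) =ᶠ[nhds y] Gaux s j k :=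
      Filter.eventuallyEq_of_mem (isOpen_Ioi.mem_nhds hy) IH
    rw [heq.deriv_eq, (Gaux_hasDerivAt hs0 hs2 k hy).deriv]

lemma contDiffOn_Gaux {s : ℝ} {j : ℕ} (hs0 : 0 < s) (hs2 : s < 1 / 2) :
    ∀ (n : ℕ) (k : ℕ), ContDiffOn ℝ n (Gaux s j k) (Ioi 0) := by
  intro n
  induction n with
  | zero =>
    intro k
    rw [Nat.cast_zero, contDiffOn_zero]
    exact fun y hy => (Gaux_hasDerivAt hs0 hs2 k hy).continuousAt.continuousWithinAt
  | succ n IH =>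
    intro k
    rw [Nat.cast_succ, contDiffOn_succ_iff_deriv_of_isOpen isOpen_Ioi]
    refine ⟨fun y hy =>
      (Gaux_hasDerivAt hs0 hs2 k hy).differentiableAt.differentiableWithinAt,
      fun h => absurd h (WithTop.natCast_ne_top n), ?_⟩
    exact (IH (k + 1)).congr fun y hy => (Gaux_hasDerivAt hs0 hs2 k hy).deriv

/-- For `s ∈ (0,1/2)` and `j ∈ ℕ`, the function `f_j` is infinitely differentiable on
`(0,∞)`, and for each `k` there is `C_{k,j}` with
`|f_j^{(k)}(y)| ≤ C_{k,j} / y^{k+1+s(j+1)}` for all `y ∈ [1,∞)`. -/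
theorem stmt_7 (s : ℝ) (j : ℕ) (hs0 : 0 < s) (hs2 : s < 1 / 2) :
    ContDiffOn ℝ (⊤ : ℕ∞) (fAux s j) (Set.Ioi 0) ∧
    ∀ k : ℕ, ∃ C : ℝ, ∀ y : ℝ, 1 ≤ y →
      |iteratedDeriv k (fAux s j) y| ≤ C / y ^ ((k : ℝ) + 1 + s * ((j : ℝ) + 1)) := by
  constructor
  · rw [fAux_eq_Gaux]
    exact contDiffOn_infty.2 fun n => contDiffOn_Gaux hs0 hs2 n 0
  · intro k
    refine ⟨2 ^ (s * ((j : ℝ) + 1)) * Real.Gamma ((k : ℝ) + s * ((j : ℝ) + 1) + 1),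
      fun y hy => ?_⟩
    have hy0 : (0:ℝ) < y := lt_of_lt_of_le one_pos hy
    rw [iteratedDeriv_fAux hs0 hs2 k y hy0]
    have hb : ∀ᵐ σ ∂(volume.restrict (Ioi 1)), ‖Haux s j k y σ‖ ≤
        2 ^ (s * ((j : ℝ) + 1)) *
          ((σ - 1) ^ ((k : ℝ) + s * ((j : ℝ) + 1)) * Real.exp (-(y * (σ - 1)))) := by
      refine (ae_restrict_iff' measurableSet_Ioi).2 (Filter.Eventually.of_forall fun σ hσ => ?_)
      rw [Real.norm_eq_abs]
      exact Haux_bound hs0 hs2 k hσ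
    have h1 := norm_integral_le_of_norm_le
      (((integrable_base (b := (k : ℝ) + s * ((j : ℝ) + 1)) (by positivity) hy0).const_mul
        (2 ^ (s * ((j : ℝ) + 1))))) hb
    rw [Real.norm_eq_abs] at h1
    refine h1.trans ?_
    rw [integral_const_mul, integral_base (by positivity) hy0,
      show (k : ℝ) + s * ((j : ℝ) + 1) + 1 = (k : ℝ) + 1 + s * ((j : ℝ) + 1) by ring,
      mul_div_assoc]
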